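/- arXiv:2203.12139 — 2 statements merged into one kernel-verified Lean document; each statement's English description precedes it below -/
import Mathlib

section
/- Let p be an unnormalized nonnegative function on a finite product space X_1 × ... × X_n with total mass Z > 0, and let q(x) = Π_i q_i(x_i) be a full-support product distribution. The coordinate-wise mean-field update q_j'(x_j) ∝ exp( E_{q_{-j}}[ log p(x_1,...,x_n) ] ) (holding q_i for i ≠ j fixed) does not decrease the ELBO: ELBO(q_1,...,q_j',...,q_n) ≥ ELBO(q_1,...,q_j,...,q_n), where ELBO(q) = E_q[log p(x)] − Σ_i E_{q_i}[log q_i(x_i)]. -/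
open Finset in
private lemma cavi_fubini {ι : Type*} [Fintype ι] [DecidableEq ι] {X : ι → Type*}
    [∀ i, Fintype (X i)] (j : ι)
    (w : (∀ i, X i) → ℝ) (hw : ∀ x y, w (Function.update x j y) = w x)
    (F : (∀ i, X i) → ℝ) (g : X j → ℝ) :
    ∑ y : X j, g y * ∑ x : ∀ i, X i, w x * F (Function.update x j y)
      = (Fintype.card (X j) : ℝ) * ∑ x : ∀ i, X i, g (x j) * (w x * F x) := by
  classical
  set e := Equiv.piSplitAt j X with he
  have key : ∀ (a y : X j) (z : ∀ i : {i // i ≠ j}, X i),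
      Function.update (e.symm (a, z)) j y = e.symm (y, z) := by
    intro a y z
    funext k
    by_cases h : k = j
    · subst h; simp [he, Equiv.piSplitAt]
    · simp [he, Equiv.piSplitAt, Function.update_of_ne h, h]
  have hj : ∀ (y : X j) z, e.symm (y, z) j = y := by
    intro y z; simp [he, Equiv.piSplitAt]
  have hsum : ∀ (h : (∀ i, X i) → ℝ),
      ∑ x, h x = ∑ a : X j, ∑ z, h (e.symm (a, z)) := by
    intro h
    rw [← Equiv.sum_comp e.symm h, Fintype.sum_prod_type]
  have step1 : ∀ y : X j,
      (∑ x, w x * F (Function.update x j y))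
        = (Fintype.card (X j) : ℝ) * ∑ z, w (e.symm (y, z)) * F (e.symm (y, z)) := by
    intro y
    rw [hsum (fun x => w x * F (Function.update x j y))]
    have h1 : ∀ (a : X j) (z), w (e.symm (a, z)) * F (Function.update (e.symm (a, z)) j y)
        = w (e.symm (y, z)) * F (e.symm (y, z)) := by
      intro a z
      rw [key a y z]
      congr 1
      rw [← key y a z, hw]
    simp only [h1, Finset.sum_const, nsmul_eq_mul, Fintype.card]
  have step2 : (∑ x, g (x j) * (w x * F x))
      = ∑ y : X j, ∑ z, g y * (w (e.symm (y, z)) * F (e.symm (y, z))) := by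
    rw [hsum (fun x => g (x j) * (w x * F x))]
    exact Finset.sum_congr rfl fun y _ => Finset.sum_congr rfl fun z _ => by rw [hj]
  simp only [step1]
  rw [step2, Finset.mul_sum]
  refine Finset.sum_congr rfl fun y _ => ?_
  simp only [Finset.mul_sum]
  exact Finset.sum_congr rfl fun z _ => by ring

private lemma cavi_sum_one {κ : Type*} [Fintype κ] [Nonempty κ] (f r : κ → ℝ)
    (hr : ∀ y, r y = Real.exp (f y) / ∑ y' : κ, Real.exp (f y')) :
    ∑ y, r y = 1 := by
  have hZ : (0 : ℝ) < ∑ y' : κ, Real.exp (f y') :=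
    Finset.sum_pos (fun y _ => Real.exp_pos _) Finset.univ_nonempty
  rw [Finset.sum_congr rfl fun y _ => hr y, ← Finset.sum_div, div_self hZ.ne']

private lemma cavi_opt {κ : Type*} [Fintype κ] [Nonempty κ] (f r : κ → ℝ)
    (hr : ∀ y, r y = Real.exp (f y) / ∑ y' : κ, Real.exp (f y')) :
    (∑ y, r y * f y) - (∑ y, r y * Real.log (r y))
      = Real.log (∑ y' : κ, Real.exp (f y')) := by
  have hZ : (0 : ℝ) < ∑ y' : κ, Real.exp (f y') :=
    Finset.sum_pos (fun y _ => Real.exp_pos _) Finset.univ_nonempty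
  have hr1 := cavi_sum_one f r hr
  have hlog : ∀ y, Real.log (r y)
      = f y - Real.log (∑ y' : κ, Real.exp (f y')) := by
    intro y
    rw [hr, Real.log_div (Real.exp_ne_zero _) hZ.ne', Real.log_exp]
  simp only [hlog, mul_sub]
  rw [Finset.sum_sub_distrib, ← Finset.sum_mul, hr1, one_mul]
  ring

private lemma cavi_gibbs {κ : Type*} [Fintype κ] [Nonempty κ] (f s : κ → ℝ)
    (hs : ∀ y, 0 < s y) (hs1 : ∑ y, s y = 1) :
    (∑ y, s y * f y) - (∑ y, s y * Real.log (s y))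
      ≤ Real.log (∑ y' : κ, Real.exp (f y')) := by
  set Z : ℝ := ∑ y' : κ, Real.exp (f y') with hZdef
  have hZ : (0 : ℝ) < Z :=
    Finset.sum_pos (fun y _ => Real.exp_pos _) Finset.univ_nonempty
  have key : ∀ y, s y * f y - s y * Real.log (s y)
      ≤ s y * Real.log Z + (Real.exp (f y) / Z - s y) := by
    intro y
    have ht : (0 : ℝ) < Real.exp (f y) / (s y * Z) :=
      div_pos (Real.exp_pos _) (mul_pos (hs y) hZ)
    have hlt := Real.log_le_sub_one_of_pos ht
    have hlogt : Real.log (Real.exp (f y) / (s y * Z))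
        = f y - Real.log (s y) - Real.log Z := by
      rw [Real.log_div (Real.exp_ne_zero _) (mul_pos (hs y) hZ).ne',
        Real.log_mul (hs y).ne' hZ.ne', Real.log_exp]
      ring
    rw [hlogt] at hlt
    have h2 := mul_le_mul_of_nonneg_left hlt (hs y).le
    have h3 : s y * (Real.exp (f y) / (s y * Z)) = Real.exp (f y) / Z := by
      rw [← mul_div_assoc, mul_div_mul_left _ _ (hs y).ne']
    nlinarith [h2, h3]
  calc (∑ y, s y * f y) - (∑ y, s y * Real.log (s y))
      = ∑ y, (s y * f y - s y * Real.log (s y)) := (Finset.sum_sub_distrib _ _).symm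
    _ ≤ ∑ y, (s y * Real.log Z + (Real.exp (f y) / Z - s y)) :=
        Finset.sum_le_sum fun y _ => key y
    _ = Real.log Z := by
        rw [Finset.sum_add_distrib, Finset.sum_sub_distrib, ← Finset.sum_mul, hs1,
          one_mul, ← Finset.sum_div, ← hZdef, div_self hZ.ne']
        ring

private lemma cavi_decomp {ι : Type*} [Fintype ι] [DecidableEq ι] {X : ι → Type*}
    [∀ i, Fintype (X i)] [∀ i, Nonempty (X i)]
    (p : (∀ i, X i) → ℝ)
    (q : ∀ i, X i → ℝ) (hq : ∀ i y, 0 < q i y) (hq1 : ∀ i, ∑ y, q i y = 1)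
    (j : ι) (r : X j → ℝ) (hr : ∑ y, r y = 1) :
    ∑ x : ∀ i, X i, (∏ i, (Function.update q j r) i (x i)) *
        (Real.log (p x) - ∑ i, Real.log ((Function.update q j r) i (x i)))
      = (∑ y, r y * ((∑ x : ∀ i, X i, (∏ i ∈ Finset.univ.erase j, q i (x i)) *
            Real.log (p (Function.update x j y))) / (Fintype.card (X j) : ℝ)))
        - (∑ y, r y * Real.log (r y))
        - (∑ x : ∀ i, X i, (∏ i ∈ Finset.univ.erase j, q i (x i)) *
            (∑ i ∈ Finset.univ.erase j, Real.log (q i (x i)))) / (Fintype.card (X j) : ℝ) := by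
  classical
  have hc : (0 : ℝ) < (Fintype.card (X j) : ℝ) := by
    exact_mod_cast (Fintype.card_pos : 0 < Fintype.card (X j))
  have hW : ∀ (x : ∀ i, X i) (y : X j),
      (∏ i ∈ Finset.univ.erase j, q i ((Function.update x j y) i))
        = ∏ i ∈ Finset.univ.erase j, q i (x i) := by
    intro x y
    exact Finset.prod_congr rfl fun i hi => by
      rw [Function.update_of_ne (Finset.ne_of_mem_erase hi)]
  have hfub := cavi_fubini j (fun x => ∏ i ∈ Finset.univ.erase j, q i (x i)) hW
  -- total mass of W is card
  have hWsum : (∑ x : ∀ i, X i, ∏ i ∈ Finset.univ.erase j, q i (x i))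
      = (Fintype.card (X j) : ℝ) := by
    have h1 := hfub (fun _ => (1 : ℝ)) (q j)
    simp only [mul_one] at h1
    rw [← Finset.sum_mul, hq1 j, one_mul] at h1
    have h2 : ∀ x : ∀ i, X i,
        q j (x j) * ∏ i ∈ Finset.univ.erase j, q i (x i) = ∏ i, q i (x i) := fun x =>
      Finset.mul_prod_erase Finset.univ (fun i => q i (x i)) (Finset.mem_univ j)
    rw [Finset.sum_congr rfl (fun x _ => h2 x)] at h1
    have h3 : ∑ x : ∀ i, X i, ∏ i, q i (x i) = 1 := by
      rw [← Fintype.prod_sum (fun i y => q i y)]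
      simp [hq1]
    rw [h3, mul_one] at h1
    exact h1
  -- pointwise rewriting of the summand
  have hterm : ∀ x : ∀ i, X i,
      (∏ i, (Function.update q j r) i (x i)) *
          (Real.log (p x) - ∑ i, Real.log ((Function.update q j r) i (x i)))
      = r (x j) * ((∏ i ∈ Finset.univ.erase j, q i (x i)) * Real.log (p x))
        - (r (x j) * Real.log (r (x j))) *
            ((∏ i ∈ Finset.univ.erase j, q i (x i)) * 1)
        - r (x j) * ((∏ i ∈ Finset.univ.erase j, q i (x i)) *
            (∑ i ∈ Finset.univ.erase j, Real.log (q i (x i)))) := by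
    intro x
    have hprod : (∏ i, (Function.update q j r) i (x i))
        = r (x j) * ∏ i ∈ Finset.univ.erase j, q i (x i) := by
      rw [← Finset.mul_prod_erase Finset.univ
        (fun i => (Function.update q j r) i (x i)) (Finset.mem_univ j)]
      simp only [Function.update_self]
      congr 1
      exact Finset.prod_congr rfl fun i hi => by
        rw [Function.update_of_ne (Finset.ne_of_mem_erase hi)]
    have hlog : (∑ i, Real.log ((Function.update q j r) i (x i)))
        = Real.log (r (x j)) + ∑ i ∈ Finset.univ.erase j, Real.log (q i (x i)) := by
      rw [← Finset.add_sum_erase Finset.univ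
        (fun i => Real.log ((Function.update q j r) i (x i))) (Finset.mem_univ j)]
      simp only [Function.update_self]
      congr 1
      exact Finset.sum_congr rfl fun i hi => by
        rw [Function.update_of_ne (Finset.ne_of_mem_erase hi)]
    rw [hprod, hlog]; ring
  rw [Finset.sum_congr rfl fun x _ => hterm x,
    Finset.sum_sub_distrib, Finset.sum_sub_distrib]
  -- three sums
  have e1 : (∑ x : ∀ i, X i,
        r (x j) * ((∏ i ∈ Finset.univ.erase j, q i (x i)) * Real.log (p x)))
      = ∑ y, r y * ((∑ x : ∀ i, X i, (∏ i ∈ Finset.univ.erase j, q i (x i)) *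
          Real.log (p (Function.update x j y))) / (Fintype.card (X j) : ℝ)) := by
    have h := hfub (fun x => Real.log (p x)) r
    beta_reduce at h
    rw [Finset.sum_congr rfl (fun y _ => (mul_div_assoc (r y) _ _).symm),
      ← Finset.sum_div]
    rw [h, mul_comm, mul_div_assoc, div_self hc.ne', mul_one]
  have e2 : (∑ x : ∀ i, X i, (r (x j) * Real.log (r (x j))) *
        ((∏ i ∈ Finset.univ.erase j, q i (x i)) * 1))
      = ∑ y, r y * Real.log (r y) := by
    have h := hfub (fun _ => (1 : ℝ)) (fun y => r y * Real.log (r y))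
    simp only [mul_one] at h ⊢

    rw [← Finset.sum_mul, hWsum] at h
    have := mul_right_cancel₀ hc.ne' (h.trans (mul_comm _ _))
    exact this.symm
  have e3 : (∑ x : ∀ i, X i, r (x j) * ((∏ i ∈ Finset.univ.erase j, q i (x i)) *
        (∑ i ∈ Finset.univ.erase j, Real.log (q i (x i)))))
      = (∑ x : ∀ i, X i, (∏ i ∈ Finset.univ.erase j, q i (x i)) *
          (∑ i ∈ Finset.univ.erase j, Real.log (q i (x i)))) / (Fintype.card (X j) : ℝ) := by
    have h := hfub (fun x => ∑ i ∈ Finset.univ.erase j, Real.log (q i (x i))) r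
    beta_reduce at h
    have hG : ∀ (x : ∀ i, X i) (y : X j),
        (∑ i ∈ Finset.univ.erase j, Real.log (q i ((Function.update x j y) i)))
          = ∑ i ∈ Finset.univ.erase j, Real.log (q i (x i)) := by
      intro x y
      exact Finset.sum_congr rfl fun i hi => by
        rw [Function.update_of_ne (Finset.ne_of_mem_erase hi)]
    simp only [hG] at h
    rw [← Finset.sum_mul, hr, one_mul] at h
    rw [eq_div_iff hc.ne', mul_comm]
    exact h.symm
  rw [e1, e2, e3]

/-- CAVI monotonicity: the coordinate-wise mean-field update
q_j'(y) ∝ exp(E_{q_{-j}}[log p(x_1,…,x_n)]) does not decrease the ELBO.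
The expectation over the other coordinates is written as a sum over the whole
product space divided by |X j| (the j-th coordinate is overwritten by
`Function.update`, so it contributes a factor |X j| that is divided out). -/
theorem stmt_9 {ι : Type*} [Fintype ι] [DecidableEq ι] {X : ι → Type*}
    [∀ i, Fintype (X i)] [∀ i, Nonempty (X i)]
    (p : (∀ i, X i) → ℝ) (hp : ∀ x, 0 < p x)
    (q : ∀ i, X i → ℝ) (hq : ∀ i y, 0 < q i y) (hq1 : ∀ i, ∑ y, q i y = 1)
    (j : ι) (qj' : X j → ℝ)
    (hqj' : ∀ y : X j, qj' y =
      Real.exp ((∑ x : ∀ i, X i, (∏ i ∈ Finset.univ.erase j, q i (x i)) *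
          Real.log (p (Function.update x j y))) / (Fintype.card (X j)))
        / ∑ y' : X j,
            Real.exp ((∑ x : ∀ i, X i, (∏ i ∈ Finset.univ.erase j, q i (x i)) *
              Real.log (p (Function.update x j y'))) / (Fintype.card (X j))))
    (ELBO : (∀ i, X i → ℝ) → ℝ)
    (hELBO : ∀ Q : ∀ i, X i → ℝ, ELBO Q =
      ∑ x : ∀ i, X i, (∏ i, Q i (x i)) *
        (Real.log (p x) - ∑ i, Real.log (Q i (x i)))) :
    ELBO q ≤ ELBO (Function.update q j qj') := by
  classical
  set F : X j → ℝ := fun y =>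
    (∑ x : ∀ i, X i, (∏ i ∈ Finset.univ.erase j, q i (x i)) *
      Real.log (p (Function.update x j y))) / (Fintype.card (X j) : ℝ) with hFdef
  have hqj'F : ∀ y : X j, qj' y = Real.exp (F y) / ∑ y' : X j, Real.exp (F y') := by
    intro y; exact hqj' y
  have hqj'1 : ∑ y, qj' y = 1 := cavi_sum_one F qj' hqj'F
  have h1 := cavi_decomp p q hq hq1 j (q j) (hq1 j)
  rw [Function.update_eq_self] at h1
  have h2 := cavi_decomp p q hq hq1 j qj' hqj'1
  rw [hELBO, hELBO, h1, h2]
  have hFy : ∀ (r : X j → ℝ),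
      (∑ y, r y * ((∑ x : ∀ i, X i, (∏ i ∈ Finset.univ.erase j, q i (x i)) *
          Real.log (p (Function.update x j y))) / (Fintype.card (X j) : ℝ)))
        = ∑ y, r y * F y := fun r => rfl
  rw [hFy, hFy]
  apply sub_le_sub_right
  calc (∑ y, q j y * F y) - (∑ y, q j y * Real.log (q j y))
      ≤ Real.log (∑ y' : X j, Real.exp (F y')) :=
        cavi_gibbs F (q j) (hq j) (hq1 j)
    _ = (∑ y, qj' y * F y) - (∑ y, qj' y * Real.log (qj' y)) :=
        (cavi_opt F qj' hqj'F).symm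
end

section
/- Let p be a positive joint distribution on a finite product space X = X_1 × ... × X_n, n ≥ 2. The mean-field ELBO, as a function of product distributions q = Π q_i, can have strict local maxima that are not global: there exists a positive distribution p on {0,1}² such that the CAVI fixed-point equations q_1(x_1) ∝ exp(E_{q_2}[log p(x_1,x_2)]), q_2(x_2) ∝ exp(E_{q_1}[log p(x_1,x_2)]) admit at least two distinct solutions with different ELBO values. -/
open Real

-- key: exp of the biased exponent ratio
lemma key3 : (3:ℝ)/4 * Real.log (9/20) + 1/4 * Real.log (1/20)
    = Real.log 3 + ((3:ℝ)/4 * Real.log (1/20) + 1/4 * Real.log (9/20)) := by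
  have h9 : Real.log (9/20 : ℝ) = Real.log 9 - Real.log 20 :=
    Real.log_div (by norm_num) (by norm_num)
  have h1 : Real.log (1/20 : ℝ) = - Real.log 20 := by
    rw [Real.log_div (by norm_num) (by norm_num), Real.log_one]; ring
  have h93 : Real.log (9:ℝ) = 2 * Real.log 3 := by
    rw [show (9:ℝ) = 3^2 by norm_num, Real.log_pow]; push_cast; ring
  rw [h9, h1, h93]; ring



/-- Multimodality of the mean-field ELBO: there is a positive distribution p
on {0,1}² for which the CAVI fixed-point equations admit two distinct
solutions with different ELBO values. -/
theorem stmt_18 :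
    ∃ p : Bool → Bool → ℝ,
      (∀ x y, 0 < p x y) ∧ (∑ x, ∑ y, p x y = 1) ∧
      ∃ q1 q2 q1' q2' : Bool → ℝ,
        (∀ x, 0 < q1 x) ∧ (∑ x, q1 x = 1) ∧
        (∀ y, 0 < q2 y) ∧ (∑ y, q2 y = 1) ∧
        (∀ x, 0 < q1' x) ∧ (∑ x, q1' x = 1) ∧
        (∀ y, 0 < q2' y) ∧ (∑ y, q2' y = 1) ∧
        -- CAVI fixed-point equations for (q1, q2)
        (∀ x, q1 x = Real.exp (∑ y, q2 y * Real.log (p x y))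
            / ∑ x', Real.exp (∑ y, q2 y * Real.log (p x' y))) ∧
        (∀ y, q2 y = Real.exp (∑ x, q1 x * Real.log (p x y))
            / ∑ y', Real.exp (∑ x, q1 x * Real.log (p x y'))) ∧
        -- CAVI fixed-point equations for (q1', q2')
        (∀ x, q1' x = Real.exp (∑ y, q2' y * Real.log (p x y))
            / ∑ x', Real.exp (∑ y, q2' y * Real.log (p x' y))) ∧
        (∀ y, q2' y = Real.exp (∑ x, q1' x * Real.log (p x y))
            / ∑ y', Real.exp (∑ x, q1' x * Real.log (p x y'))) ∧
        -- the two solutions are distinct and have different ELBO values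
        (q1, q2) ≠ (q1', q2') ∧
        (∑ x, ∑ y, q1 x * q2 y * Real.log (p x y / (q1 x * q2 y)))
          ≠ ∑ x, ∑ y, q1' x * q2' y * Real.log (p x y / (q1' x * q2' y)) := by
  refine ⟨fun x y => if x = y then 9/20 else 1/20, ?_, ?_,
    (fun x => if x then 1/4 else 3/4), (fun y => if y then 1/4 else 3/4),
    (fun _ => 1/2), (fun _ => 1/2), ?_, ?_, ?_, ?_, ?_, ?_, ?_, ?_, ?_, ?_, ?_, ?_, ?_, ?_⟩
  · intro x y; cases x <;> cases y <;> norm_num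
  · simp [Fintype.sum_bool]; norm_num
  · intro x; cases x <;> norm_num
  · simp [Fintype.sum_bool]; norm_num
  · intro y; cases y <;> norm_num
  · simp [Fintype.sum_bool]; norm_num
  · intro x; norm_num
  · simp [Fintype.sum_bool]
  · intro y; norm_num
  · simp [Fintype.sum_bool]
  · -- CAVI for q1
    intro x
    simp only [Fintype.sum_bool]
    cases x <;> simp only [if_true, if_false, Bool.true_eq_false, Bool.false_eq_true] <;>
    · have hE := Real.exp_pos ((3:ℝ)/4 * Real.log (1/20) + 1/4 * Real.log (9/20))
      rw [show (1:ℝ)/4 * Real.log (1/20) + 3/4 * Real.log (9/20)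
            = 3/4 * Real.log (9/20) + 1/4 * Real.log (1/20) by ring,
          show (1:ℝ)/4 * Real.log (9/20) + 3/4 * Real.log (1/20)
            = 3/4 * Real.log (1/20) + 1/4 * Real.log (9/20) by ring,
          key3]
      rw [show Real.exp (Real.log 3 + ((3:ℝ)/4 * Real.log (1/20) + 1/4 * Real.log (9/20)))
            = 3 * Real.exp ((3:ℝ)/4 * Real.log (1/20) + 1/4 * Real.log (9/20)) by
          rw [Real.exp_add, Real.exp_log (by norm_num : (0:ℝ) < 3)]]
      field_simp
      ring
  · -- CAVI for q2 (symmetric)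
    intro y
    simp only [Fintype.sum_bool]
    cases y <;> simp only [if_true, if_false, Bool.true_eq_false, Bool.false_eq_true] <;>
    · have hE := Real.exp_pos ((3:ℝ)/4 * Real.log (1/20) + 1/4 * Real.log (9/20))
      rw [show (1:ℝ)/4 * Real.log (1/20) + 3/4 * Real.log (9/20)
            = 3/4 * Real.log (9/20) + 1/4 * Real.log (1/20) by ring,
          show (1:ℝ)/4 * Real.log (9/20) + 3/4 * Real.log (1/20)
            = 3/4 * Real.log (1/20) + 1/4 * Real.log (9/20) by ring,
          key3]
      rw [show Real.exp (Real.log 3 + ((3:ℝ)/4 * Real.log (1/20) + 1/4 * Real.log (9/20)))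
            = 3 * Real.exp ((3:ℝ)/4 * Real.log (1/20) + 1/4 * Real.log (9/20)) by
          rw [Real.exp_add, Real.exp_log (by norm_num : (0:ℝ) < 3)]]
      field_simp
      ring
  · -- CAVI for q1' uniform
    intro x
    simp only [Fintype.sum_bool]
    cases x <;> simp only [if_true, if_false, Bool.true_eq_false, Bool.false_eq_true] <;>
    · rw [show (1:ℝ)/2 * Real.log (9/20) + 1/2 * Real.log (1/20)
            = 1/2 * Real.log (1/20) + 1/2 * Real.log (9/20) by ring]
      have hE := Real.exp_pos ((1:ℝ)/2 * Real.log (1/20) + 1/2 * Real.log (9/20))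
      field_simp
      norm_num
  · intro y
    simp only [Fintype.sum_bool]
    cases y <;> simp only [if_true, if_false, Bool.true_eq_false, Bool.false_eq_true] <;>
    · rw [show (1:ℝ)/2 * Real.log (9/20) + 1/2 * Real.log (1/20)
            = 1/2 * Real.log (1/20) + 1/2 * Real.log (9/20) by ring]
      have hE := Real.exp_pos ((1:ℝ)/2 * Real.log (1/20) + 1/2 * Real.log (9/20))
      field_simp
      norm_num
  · -- distinctness
    intro h
    have h1 := congrFun (congrArg Prod.fst h) false
    norm_num at h1
  · -- ELBO values differ
    simp only [Fintype.sum_bool]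
    norm_num
    intro h
    set l2 := Real.log 2 with hl2
    set l3 := Real.log 3 with hl3
    set l5 := Real.log 5 with hl5
    have e1 : Real.log ((36:ℝ)/5) = 2*l2 + 2*l3 - l5 := by
      rw [show (36:ℝ)/5 = 2^2*3^2/5 by norm_num,
        Real.log_div (by norm_num) (by norm_num),
        Real.log_mul (by norm_num) (by norm_num), Real.log_pow, Real.log_pow]
      push_cast; ring
    have e2 : Real.log ((4:ℝ)/15) = 2*l2 - l3 - l5 := by
      rw [show (4:ℝ)/15 = 2^2/(3*5) by norm_num,
        Real.log_div (by norm_num) (by norm_num),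
        Real.log_mul (by norm_num) (by norm_num), Real.log_pow]
      push_cast; ring
    have e3 : Real.log ((4:ℝ)/5) = 2*l2 - l5 := by
      rw [show (4:ℝ)/5 = 2^2/5 by norm_num,
        Real.log_div (by norm_num) (by norm_num), Real.log_pow]
      push_cast; ring
    have e4 : Real.log ((9:ℝ)/5) = 2*l3 - l5 := by
      rw [show (9:ℝ)/5 = 3^2/5 by norm_num,
        Real.log_div (by norm_num) (by norm_num), Real.log_pow]
      push_cast; ring
    have e5 : Real.log ((1:ℝ)/5) = -l5 := by
      rw [Real.log_div (by norm_num) (by norm_num), Real.log_one]; ring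
    rw [e1, e2, e3, e4, e5] at h
    have hfin : Real.log 256 = Real.log 243 := by
      rw [show (256:ℝ) = 2^8 by norm_num, show (243:ℝ) = 3^5 by norm_num,
        Real.log_pow, Real.log_pow]
      push_cast
      rw [← hl2, ← hl3]
      linarith
    have := congrArg Real.exp hfin
    rw [Real.exp_log (by norm_num), Real.exp_log (by norm_num)] at this
    norm_num at this
end
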